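/- In the reduction graph G constructed from a 3-SAT instance Φ as follows — for each variable x a long paw G_x (triangle x, x̄, u_x plus path u_x–v_x–w_x), for each clause c a clause vertex adjacent to the literal vertices of its literals, and all clause vertices forming a clique — every semitotal dominating set D of G satisfies |D ∩ V(G_x)| ≥ 2 for every variable x. -/
import Mathlib


open SimpleGraph

/-- `D` is a total dominating set of `G`: every vertex has a neighbour in `D`. -/
def IsTotalDomSet {V : Type*} (G : SimpleGraph V) (D : Set V) : Prop :=
  ∀ v : V, ∃ u ∈ D, G.Adj u v

/-- `x` and `y` are (distinct or not) at distance at most two: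
adjacent or joined through a common neighbour. -/
def WithinTwo {V : Type*} (G : SimpleGraph V) (x y : V) : Prop :=
  G.Adj x y ∨ ∃ z, G.Adj x z ∧ G.Adj z y

/-- `x` and `y` are at distance exactly two. -/
def DistTwo {V : Type*} (G : SimpleGraph V) (x y : V) : Prop :=
  x ≠ y ∧ ¬ G.Adj x y ∧ ∃ z, G.Adj x z ∧ G.Adj z y

/-- `D` is a semitotal dominating set of `G`: a dominating set in which every
vertex of `D` has another vertex of `D` within distance two (a witness). -/
def IsSemitotalDomSet {V : Type*} (G : SimpleGraph V) (D : Set V) : Prop :=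
  (∀ v : V, v ∉ D → ∃ u ∈ D, G.Adj u v) ∧
  (∀ x ∈ D, ∃ y ∈ D, y ≠ x ∧ WithinTwo G x y)

/-- The total domination number `γ_t`. -/
noncomputable def totalDomNum {V : Type*} (G : SimpleGraph V) [Fintype V] : ℕ :=
  sInf {n | ∃ D : Set V, IsTotalDomSet G D ∧ D.ncard = n}

/-- The semitotal domination number `γ_{t2}`. -/
noncomputable def semitotalDomNum {V : Type*} (G : SimpleGraph V) [Fintype V] : ℕ :=
  sInf {n | ∃ D : Set V, IsSemitotalDomSet G D ∧ D.ncard = n}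

/-- The graph obtained from `G` by contracting the edge `xy`:
delete `y` and merge it into `x`. -/
def contractEdge {V : Type*} (G : SimpleGraph V) (x y : V) :
    SimpleGraph {v : V // v ≠ y} :=
  SimpleGraph.fromRel (fun a b =>
    G.Adj a.1 b.1 ∨ (a.1 = x ∧ G.Adj y b.1) ∨ (b.1 = x ∧ G.Adj y a.1))

/-- A bundled finite simple graph. -/
structure FGraph : Type 1 where
  V : Type
  fin : Fintype V
  G : SimpleGraph V

attribute [instance] FGraph.fin

noncomputable def FGraph.tdn (A : FGraph) : ℕ := totalDomNum A.G

noncomputable def FGraph.stdn (A : FGraph) : ℕ := semitotalDomNum A.G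

/-- `B` is obtained from `A` by contracting a single edge. -/
def FGraph.Contract (A B : FGraph) : Prop :=
  ∃ x y : A.V, A.G.Adj x y ∧ ∃ e : B.V ≃ {v : A.V // v ≠ y},
    ∀ a b : B.V, B.G.Adj a b ↔ (contractEdge A.G x y).Adj (e a) (e b)

/-- `B` is obtained from `A` by a sequence of `n` edge contractions. -/
inductive ContractStar : ℕ → FGraph → FGraph → Prop
  | refl (A : FGraph) : ContractStar 0 A A
  | step {n : ℕ} {A B C : FGraph} : A.Contract B → ContractStar n B C →
      ContractStar (n + 1) A C

/-- At most `k` edge contractions suffice to decrease the total domination number by one. -/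
def ctTDLe (A : FGraph) (k : ℕ) : Prop :=
  ∃ n ≤ k, ∃ B : FGraph, ContractStar n A B ∧ B.tdn = A.tdn - 1

/-- At most `k` edge contractions suffice to decrease the semitotal domination number by one. -/
def ctSTLe (A : FGraph) (k : ℕ) : Prop :=
  ∃ n ≤ k, ∃ B : FGraph, ContractStar n A B ∧ B.stdn = A.stdn - 1

/-- `ct_{γ_t}`: the minimum number of edge contractions needed to decrease `γ_t` by one. -/
noncomputable def ctTDNum (A : FGraph) : ℕ :=
  sInf {n | ∃ B : FGraph, ContractStar n A B ∧ B.tdn = A.tdn - 1}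

/-- `ct_{γ_{t2}}`: the minimum number of edge contractions needed to decrease `γ_{t2}` by one. -/
noncomputable def ctSTNum (A : FGraph) : ℕ :=
  sInf {n | ∃ B : FGraph, ContractStar n A B ∧ B.stdn = A.stdn - 1}

/-- Disjoint union of two simple graphs. -/
def disjGraphUnion {α β : Type*} (G : SimpleGraph α) (H : SimpleGraph β) :
    SimpleGraph (α ⊕ β) :=
  SimpleGraph.fromRel (fun a b =>
    match a, b with
    | Sum.inl a, Sum.inl b => G.Adj a b
    | Sum.inr a, Sum.inr b => H.Adj a b
    | _, _ => False)

/-- The reduction graph built from a 3-SAT instance with variables `X`, clauses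
`C` and literal membership `lit` (`(x, true) ∈ lit c` means the positive literal
`x` occurs in `c`).  For a variable `x`, the gadget `G_x` has vertices
`(x,0) = x`, `(x,1) = x̄`, `(x,2) = uₓ`, `(x,3) = vₓ`, `(x,4) = wₓ` forming a long
paw; each clause vertex is adjacent to the literal vertices of its literals; the
clause vertices form a clique. -/
def satG {X C : Type*} (lit : C → Set (X × Bool)) :
    SimpleGraph ((X × Fin 5) ⊕ C) :=
  SimpleGraph.fromRel (fun a b =>
    match a, b with
    | Sum.inl (x, i), Sum.inl (y, j) => x = y ∧
        ((i = 0 ∧ j = 1) ∨ (i = 0 ∧ j = 2) ∨ (i = 1 ∧ j = 2) ∨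
         (i = 2 ∧ j = 3) ∨ (i = 3 ∧ j = 4))
    | Sum.inl (x, i), Sum.inr c =>
        (i = 0 ∧ (x, true) ∈ lit c) ∨ (i = 1 ∧ (x, false) ∈ lit c)
    | Sum.inr _, Sum.inr _ => True
    | _, _ => False)


lemma adj4 {X C : Type*} (lit : C → Set (X × Bool)) (x : X)
    (b : (X × Fin 5) ⊕ C) (h : (satG lit).Adj b (Sum.inl (x, 4))) :
    b = Sum.inl (x, 3) := by
  rcases b with ⟨y, j⟩ | c
  · simp only [satG, SimpleGraph.fromRel_adj] at h
    obtain ⟨hne, h | h⟩ := h <;> obtain ⟨rfl, h⟩ := h <;> fin_cases j <;> simp_all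
  · simp only [satG, SimpleGraph.fromRel_adj] at h
    obtain ⟨hne, h | h⟩ := h <;> simp_all

lemma adj3 {X C : Type*} (lit : C → Set (X × Bool)) (x : X)
    (b : (X × Fin 5) ⊕ C) (h : (satG lit).Adj b (Sum.inl (x, 3))) :
    b = Sum.inl (x, 2) ∨ b = Sum.inl (x, 4) := by
  rcases b with ⟨y, j⟩ | c
  · simp only [satG, SimpleGraph.fromRel_adj] at h
    obtain ⟨hne, h | h⟩ := h <;> obtain ⟨rfl, h⟩ := h <;> fin_cases j <;> simp_all
  · simp only [satG, SimpleGraph.fromRel_adj] at h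
    obtain ⟨hne, h | h⟩ := h <;> simp_all

lemma adj2 {X C : Type*} (lit : C → Set (X × Bool)) (x : X)
    (b : (X × Fin 5) ⊕ C) (h : (satG lit).Adj b (Sum.inl (x, 2))) :
    b = Sum.inl (x, 0) ∨ b = Sum.inl (x, 1) ∨ b = Sum.inl (x, 3) := by
  rcases b with ⟨y, j⟩ | c
  · simp only [satG, SimpleGraph.fromRel_adj] at h
    obtain ⟨hne, h | h⟩ := h <;> obtain ⟨rfl, h⟩ := h <;> fin_cases j <;> simp_all
  · simp only [satG, SimpleGraph.fromRel_adj] at h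
    obtain ⟨hne, h | h⟩ := h <;> simp_all

/-- In the 3-SAT reduction graph, every semitotal dominating set contains at
least two vertices of each variable gadget `G_x`. -/
theorem stmt13 {X C : Type*} [Fintype X] [Fintype C] (lit : C → Set (X × Bool))
    (D : Set ((X × Fin 5) ⊕ C)) (hD : IsSemitotalDomSet (satG lit) D) (x : X) :
    2 ≤ (D ∩ {w | ∃ i : Fin 5, w = Sum.inl (x, i)}).ncard := by
  obtain ⟨hdom, hwit⟩ := hD
  have ha : ∃ a ∈ D, a = Sum.inl (x, 3) ∨ a = Sum.inl (x, 4) := by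
    by_cases hw : Sum.inl (x, (4 : Fin 5)) ∈ D
    · exact ⟨_, hw, Or.inr rfl⟩
    · obtain ⟨u, huD, hu⟩ := hdom _ hw
      exact ⟨u, huD, Or.inl (adj4 lit x u hu)⟩
  obtain ⟨a, haD, hacase⟩ := ha
  obtain ⟨y, hyD, hyne, hy2⟩ := hwit a haD
  have hy : ∃ i : Fin 5, y = Sum.inl (x, i) := by
    rcases hacase with rfl | rfl
    · rcases hy2 with h | ⟨z, hz1, hz2⟩
      · rcases adj3 lit x y h.symm with h | h <;> exact ⟨_, h⟩
      · rcases adj3 lit x z hz1.symm with rfl | rfl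
        · rcases adj2 lit x y hz2.symm with h | h | h <;> exact ⟨_, h⟩
        · exact ⟨_, adj4 lit x y hz2.symm⟩
    · rcases hy2 with h | ⟨z, hz1, hz2⟩
      · exact ⟨_, adj4 lit x y h.symm⟩
      · have := adj4 lit x z hz1.symm
        subst this
        rcases adj3 lit x y hz2.symm with h | h <;> exact ⟨_, h⟩
  have haS : a ∈ D ∩ {w | ∃ i : Fin 5, w = Sum.inl (x, i)} := by
    refine ⟨haD, ?_⟩
    rcases hacase with rfl | rfl <;> exact ⟨_, rfl⟩
  have hyS : y ∈ D ∩ {w | ∃ i : Fin 5, w = Sum.inl (x, i)} := ⟨hyD, hy⟩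
  have : 1 < (D ∩ {w | ∃ i : Fin 5, w = Sum.inl (x, i)}).ncard :=
    Set.one_lt_ncard_iff (Set.toFinite _) |>.2 ⟨a, y, haS, hyS, fun h => hyne h.symm⟩
  omega
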